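/- Let n ≥ 1, let R be an n×n real upper triangular matrix with positive diagonal entries r_11,…,r_nn, let σ > 0, and let B = {x ∈ ℤⁿ : ℓ ≤ x ≤ u} with ℓ, u ∈ ℤⁿ and ℓ_i < u_i for all i. Fix a deterministic x̂ ∈ B, let ṽ be an ℝⁿ-valued random vector with distribution N(0, σ²Iₙ), and set d = x̂ + R⁻¹ṽ. Define the box-constrained rounding detector componentwise by x_i^BR = ℓ_i if ⌊d_i⌉ ≤ ℓ_i, x_i^BR = ⌊d_i⌉ if ℓ_i < ⌊d_i⌉ < u_i, and x_i^BR = u_i if ⌊d_i⌉ ≥ u_i, where ⌊·⌉ denotes rounding to the nearest integer (ties broken toward smaller magnitude). Then the success probability satisfies Pr(x^BR = x̂) = det(R)/(2πσ²)^{n/2} · ∫_{I_n}⋯∫_{I_1} exp(−‖Rξ‖²/(2σ²)) dξ_1⋯dξ_n, where I_i = (−∞, 1/2] if x̂_i = ℓ_i, I_i = [−1/2, 1/2] if ℓ_i < x̂_i < u_i, and I_i = [−1/2, ∞) if x̂_i = u_i. -/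

import Mathlib

open MeasureTheory ProbabilityTheory Matrix
open scoped ENNReal NNReal

/-- Nearest integer rounding, with ties broken toward the integer of smaller magnitude. -/
noncomputable def nround (x : ℝ) : ℤ :=
  if 0 ≤ x then ⌈x - 1 / 2⌉ else ⌊x + 1 / 2⌋

/-- Clamp the nearest integer of `c` to the interval `[a, b]`:
`a` if `⌊c⌉ ≤ a`, `b` if `⌊c⌉ ≥ b`, and `⌊c⌉` otherwise. -/
noncomputable def clampInt (a b : ℤ) (c : ℝ) : ℤ :=
  if nround c ≤ a then a
  else if b ≤ nround c then b
  else nround c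

/-- The box-constrained rounding detector computed from `d`. -/
noncomputable def roundDetector {n : ℕ} (l u : Fin n → ℤ) (d : Fin n → ℝ) : Fin n → ℤ :=
  fun i => clampInt (l i) (u i) (d i)

/-- Auxiliary recursion for the box-constrained Babai detector: `babaiAux R l u y k`
has the correct Babai values at indices `i` with `i + k ≥ n` (computed from the last
index downwards). -/
noncomputable def babaiAux {n : ℕ} (R : Matrix (Fin n) (Fin n) ℝ) (l u : Fin n → ℤ)
    (y : Fin n → ℝ) : ℕ → Fin n → ℤ
  | 0 => fun _ => 0
  | k + 1 => fun i =>
      if i.val + (k + 1) = n then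
        clampInt (l i) (u i)
          ((y i - ∑ j : Fin n, if i < j then R i j * (babaiAux R l u y k j : ℝ) else 0) / R i i)
      else babaiAux R l u y k i

/-- The box-constrained Babai detector computed from `y`, for upper triangular `R`:
for `i = n, …, 1`, `c_i = (y_i - ∑_{j>i} r_{ij} x_j^BB)/r_{ii}` and `x_i^BB` is `⌊c_i⌉`
clamped to `[l_i, u_i]`. -/
noncomputable def babaiDetector {n : ℕ} (R : Matrix (Fin n) (Fin n) ℝ) (l u : Fin n → ℤ)
    (y : Fin n → ℝ) : Fin n → ℤ :=
  babaiAux R l u y n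

/-- `phi σ ζ = (2/√(2π)) ∫_0^{ζ/(2σ)} exp(-t²/2) dt`. -/
noncomputable def phi (σ ζ : ℝ) : ℝ :=
  2 / Real.sqrt (2 * Real.pi) * ∫ t in (0:ℝ)..(ζ / (2 * σ)), Real.exp (-(t ^ 2) / 2)


section AuxProofs

lemma nround_le_of_lt {m : ℤ} {x : ℝ} (h : x < (m : ℝ) + 1 / 2) : nround x ≤ m := by
  unfold nround
  split_ifs with hx
  · exact Int.ceil_le.mpr (by linarith)
  · have h2 : ⌊x + 1 / 2⌋ < m + 1 := Int.floor_lt.mpr (by push_cast; linarith)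
    omega

lemma le_of_nround_le {m : ℤ} {x : ℝ} (h : nround x ≤ m) : x ≤ (m : ℝ) + 1 / 2 := by
  unfold nround at h
  split_ifs at h with hx
  · have h1 := Int.le_ceil (x - 1 / 2)
    have h2 : ((⌈x - 1 / 2⌉ : ℤ) : ℝ) ≤ m := by exact_mod_cast h
    linarith
  · have h1 := Int.lt_floor_add_one (x + 1 / 2)
    have h2 : ((⌊x + 1 / 2⌋ : ℤ) : ℝ) ≤ m := by exact_mod_cast h
    linarith

lemma le_nround_of_lt {m : ℤ} {x : ℝ} (h : (m : ℝ) - 1 / 2 < x) : m ≤ nround x := by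
  unfold nround
  split_ifs with hx
  · have h2 : m - 1 < ⌈x - 1 / 2⌉ := Int.lt_ceil.mpr (by push_cast; linarith)
    omega
  · exact Int.le_floor.mpr (by push_cast; linarith)

lemma le_of_le_nround {m : ℤ} {x : ℝ} (h : m ≤ nround x) : (m : ℝ) - 1 / 2 ≤ x := by
  unfold nround at h
  split_ifs at h with hx
  · have h1 := Int.ceil_lt_add_one (x - 1 / 2)
    have h2 : (m : ℝ) ≤ ⌈x - 1 / 2⌉ := by exact_mod_cast h
    linarith
  · have h1 := Int.floor_le (x + 1 / 2)
    have h2 : (m : ℝ) ≤ ⌊x + 1 / 2⌋ := by exact_mod_cast h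
    linarith

lemma clampInt_low {a b : ℤ} (hab : a < b) {t : ℝ} (ht : t < 1 / 2) :
    clampInt a b ((a : ℝ) + t) = a := by
  have h : nround ((a : ℝ) + t) ≤ a := nround_le_of_lt (by linarith)
  simp [clampInt, h]

lemma clampInt_low_rev {a b : ℤ} (hab : a < b) {t : ℝ}
    (h : clampInt a b ((a : ℝ) + t) = a) : t ≤ 1 / 2 := by
  have hle : nround ((a : ℝ) + t) ≤ a := by
    unfold clampInt at h
    split_ifs at h with h1 h2 <;> omega
  have := le_of_nround_le hle
  linarith

lemma clampInt_high {a b : ℤ} (hab : a < b) {t : ℝ} (ht : -(1 / 2) < t) :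
    clampInt a b ((b : ℝ) + t) = b := by
  have h2 : b ≤ nround ((b : ℝ) + t) := le_nround_of_lt (by linarith)
  have h1 : ¬ nround ((b : ℝ) + t) ≤ a := by omega
  simp [clampInt, h1, h2]

lemma clampInt_high_rev {a b : ℤ} (hab : a < b) {t : ℝ}
    (h : clampInt a b ((b : ℝ) + t) = b) : -(1 / 2) ≤ t := by
  have hb : b ≤ nround ((b : ℝ) + t) := by
    unfold clampInt at h
    split_ifs at h with h1 h2 <;> omega
  have := le_of_le_nround hb
  linarith

lemma clampInt_mid {a b m : ℤ} (ha : a < m) (hb : m < b) {t : ℝ}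
    (h1 : -(1 / 2) < t) (h2 : t < 1 / 2) :
    clampInt a b ((m : ℝ) + t) = m := by
  have e : nround ((m : ℝ) + t) = m :=
    le_antisymm (nround_le_of_lt (by linarith)) (le_nround_of_lt (by linarith))
  unfold clampInt
  rw [e, if_neg (by omega), if_neg (by omega)]

lemma clampInt_mid_rev {a b m : ℤ} (ha : a < m) (hb : m < b) {t : ℝ}
    (h : clampInt a b ((m : ℝ) + t) = m) : -(1 / 2) ≤ t ∧ t ≤ 1 / 2 := by
  have e : nround ((m : ℝ) + t) = m := by
    unfold clampInt at h
    split_ifs at h with h1 h2 <;> omega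
  constructor
  · have := le_of_le_nround e.ge; linarith
  · have := le_of_nround_le e.le; linarith

lemma pi_gaussian_eq (n : ℕ) {v : ℝ≥0} (hv : v ≠ 0) :
    (Measure.pi fun _ : Fin n => gaussianReal 0 v)
      = (volume : Measure (Fin n → ℝ)).withDensity
          fun y => ENNReal.ofReal (∏ i, gaussianPDFReal 0 v (y i)) := by
  refine Measure.pi_eq fun s hs => ?_
  rw [withDensity_apply _ (MeasurableSet.univ_pi hs)]
  have hnn : ∀ (y : Fin n → ℝ), 0 ≤ ∏ i, Set.indicator (s i) (gaussianPDFReal 0 v) (y i) :=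
    fun y => Finset.prod_nonneg fun i _ =>
      Set.indicator_nonneg (fun x _ => gaussianPDFReal_nonneg _ _ _) _
  have hint : Integrable
      (fun y : Fin n → ℝ => ∏ i, Set.indicator (s i) (gaussianPDFReal 0 v) (y i)) :=
    Integrable.fintype_prod fun i => (integrable_gaussianPDFReal 0 v).indicator (hs i)
  have hind : ∀ y : Fin n → ℝ,
      Set.indicator (Set.univ.pi s) (fun y => ∏ i, gaussianPDFReal 0 v (y i)) y
        = ∏ i, Set.indicator (s i) (gaussianPDFReal 0 v) (y i) := by
    intro y
    by_cases hy : y ∈ Set.univ.pi s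
    · rw [Set.indicator_of_mem hy]
      exact Finset.prod_congr rfl fun i _ =>
        (Set.indicator_of_mem (hy i (Set.mem_univ i)) _).symm
    · rw [Set.indicator_of_notMem hy]
      rw [Set.mem_pi] at hy
      push_neg at hy
      obtain ⟨i, -, hi⟩ := hy
      exact (Finset.prod_eq_zero (Finset.mem_univ i) (Set.indicator_of_notMem hi _)).symm
  calc ∫⁻ y in Set.univ.pi s, ENNReal.ofReal (∏ i, gaussianPDFReal 0 v (y i)) ∂volume
      = ∫⁻ (y : Fin n → ℝ), ENNReal.ofReal (∏ i, Set.indicator (s i) (gaussianPDFReal 0 v) (y i)) ∂volume := by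
        rw [← lintegral_indicator (MeasurableSet.univ_pi hs) _]
        congr 1
        ext y
        rw [← hind y]
        by_cases hy : y ∈ Set.univ.pi s
        · rw [Set.indicator_of_mem hy, Set.indicator_of_mem hy]
        · rw [Set.indicator_of_notMem hy, Set.indicator_of_notMem hy, ENNReal.ofReal_zero]
    _ = ENNReal.ofReal (∫ (y : Fin n → ℝ), ∏ i, Set.indicator (s i) (gaussianPDFReal 0 v) (y i)) :=
        (ofReal_integral_eq_lintegral_ofReal hint (ae_of_all _ hnn)).symm
    _ = ENNReal.ofReal (∏ i, ∫ x, Set.indicator (s i) (gaussianPDFReal 0 v) x) := by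
        rw [integral_fintype_prod_volume_eq_prod]
    _ = ∏ i, gaussianReal 0 v (s i) := by
        rw [ENNReal.ofReal_prod_of_nonneg fun i _ =>
          integral_nonneg (Set.indicator_nonneg (fun x _ => gaussianPDFReal_nonneg _ _ _))]
        refine Finset.prod_congr rfl fun i _ => ?_
        rw [integral_indicator (hs i), ← gaussianReal_apply_eq_integral 0 hv]

end AuxProofs

/-- Success probability of the box-constrained rounding detector for a deterministic
parameter `x̂ ∈ B` (Theorem 1 of the paper). -/



theorem success_prob_boxRounding_deterministic
    {n : ℕ} (hn : 1 ≤ n)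
    (R : Matrix (Fin n) (Fin n) ℝ)
    (hupper : ∀ i j : Fin n, j < i → R i j = 0)
    (hdiag : ∀ i : Fin n, 0 < R i i)
    (σ : ℝ) (hσ : 0 < σ)
    (l u : Fin n → ℤ) (hlu : ∀ i, l i < u i)
    (xhat : Fin n → ℤ) (hxl : ∀ i, l i ≤ xhat i) (hxu : ∀ i, xhat i ≤ u i)
    {Ω : Type} [MeasurableSpace Ω] (P : Measure Ω) [IsProbabilityMeasure P]
    (v : Ω → Fin n → ℝ) (hmv : Measurable v)
    (hv : Measure.map v P = Measure.pi fun _ : Fin n => gaussianReal 0 ⟨σ ^ 2, sq_nonneg σ⟩) :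
    (P {ω | roundDetector l u (fun i => (xhat i : ℝ) + (R⁻¹ *ᵥ v ω) i) = xhat}).toReal
      = R.det / (2 * Real.pi * σ ^ 2) ^ ((n : ℝ) / 2) *
        ∫ ξ in Set.univ.pi (fun i =>
            if xhat i = l i then Set.Iic (1 / 2 : ℝ)
            else if xhat i = u i then Set.Ici (-(1 / 2) : ℝ)
            else Set.Icc (-(1 / 2) : ℝ) (1 / 2)),
          Real.exp (-(∑ j, ((R *ᵥ ξ) j) ^ 2) / (2 * σ ^ 2)) := by
  classical
  have hπ : (0 : ℝ) < 2 * Real.pi * σ ^ 2 := by positivity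
  set v₀ : ℝ≥0 := ⟨σ ^ 2, sq_nonneg σ⟩ with hv₀def
  have hc : (v₀ : ℝ) = σ ^ 2 := rfl
  have hv₀ : v₀ ≠ 0 := by
    intro h
    rw [h] at hc
    simp only [NNReal.coe_zero] at hc
    nlinarith
  -- determinant facts
  have hdet : R.det = ∏ i, R i i := Matrix.det_of_upperTriangular fun i j h => hupper i j h
  have hdetpos : 0 < R.det := hdet ▸ Finset.prod_pos fun i _ => hdiag i
  have hdetne : R.det ≠ 0 := ne_of_gt hdetpos
  have hunit : IsUnit R.det := isUnit_iff_ne_zero.mpr hdetne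
  have hinv : R⁻¹ * R = 1 := Matrix.nonsing_inv_mul R hunit
  have hdetinv_mul : R⁻¹.det * R.det = 1 := by rw [← Matrix.det_mul, hinv, Matrix.det_one]
  have hdetinvne : R⁻¹.det ≠ 0 := left_ne_zero_of_mul_eq_one hdetinv_mul
  -- the inverse map
  set W : (Fin n → ℝ) → (Fin n → ℝ) := fun y => R⁻¹ *ᵥ y with hWdef
  have hWcoe : ⇑(Matrix.toLin' R⁻¹) = W := funext fun y => Matrix.toLin'_apply R⁻¹ y
  have hWmeas : Measurable W := by
    rw [← hWcoe]
    exact (LinearMap.continuous_on_pi _).measurable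
  -- sets
  set I : Fin n → Set ℝ := fun i =>
      if xhat i = l i then Set.Iic (1 / 2 : ℝ)
      else if xhat i = u i then Set.Ici (-(1 / 2) : ℝ)
      else Set.Icc (-(1 / 2) : ℝ) (1 / 2) with hIdef
  have hImeas : ∀ i, MeasurableSet (I i) := by
    intro i
    simp only [hIdef]
    split_ifs <;> measurability
  set K : Set (Fin n → ℝ) := Set.univ.pi I with hKdef
  have hK : MeasurableSet K := MeasurableSet.univ_pi hImeas
  set Sc : Set (Fin n → ℝ) := W ⁻¹' K with hScdef
  have hSc : MeasurableSet Sc := hWmeas hK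
  set J : Fin n → Set ℝ := fun i =>
      if xhat i = l i then Set.Iio (1 / 2 : ℝ)
      else if xhat i = u i then Set.Ioi (-(1 / 2) : ℝ)
      else Set.Ioo (-(1 / 2) : ℝ) (1 / 2) with hJdef
  set So : Set (Fin n → ℝ) := W ⁻¹' (Set.univ.pi J) with hSodef
  set N : Set (Fin n → ℝ) :=
      ⋃ i, ({y | W y i = 1 / 2} ∪ {y | W y i = -(1 / 2)}) with hNdef
  have hNmeas : MeasurableSet N := by
    refine MeasurableSet.iUnion fun i => MeasurableSet.union ?_ ?_ <;>
      exact ((measurable_pi_apply i).comp hWmeas) (measurableSet_singleton _)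
  set T : Set (Fin n → ℝ) :=
      {y | ∀ i, clampInt (l i) (u i) ((xhat i : ℝ) + W y i) = xhat i} with hTdef
  -- the event as a preimage
  have hE : {ω | roundDetector l u (fun i => (xhat i : ℝ) + (R⁻¹ *ᵥ v ω) i) = xhat}
      = v ⁻¹' T := by
    ext ω
    simp only [Set.mem_setOf_eq, Set.mem_preimage, hTdef, funext_iff, roundDetector, hWdef]
  -- inclusions
  have hTsub : T ⊆ Sc := by
    intro y hy
    simp only [hScdef, hKdef, Set.mem_preimage, Set.mem_pi, Set.mem_univ, forall_true_left]
    intro i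
    have h := hy i
    simp only [hIdef]
    by_cases h1 : xhat i = l i
    · rw [h1] at h
      rw [if_pos h1]
      exact Set.mem_Iic.mpr (clampInt_low_rev (hlu i) h)
    · by_cases h2 : xhat i = u i
      · rw [h2] at h
        rw [if_neg h1, if_pos h2]
        exact Set.mem_Ici.mpr (clampInt_high_rev (hlu i) h)
      · have ha : l i < xhat i := (hxl i).lt_of_ne fun e => h1 e.symm
        have hb : xhat i < u i := (hxu i).lt_of_ne h2
        rw [if_neg h1, if_neg h2]
        exact clampInt_mid_rev ha hb h
  have hSosub : So ⊆ T := by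
    intro y hy
    simp only [hSodef, Set.mem_preimage, Set.mem_pi, Set.mem_univ, forall_true_left] at hy
    intro i
    have h := hy i
    simp only [hJdef] at h
    by_cases h1 : xhat i = l i
    · rw [h1]
      rw [if_pos h1] at h
      exact clampInt_low (hlu i) h
    · by_cases h2 : xhat i = u i
      · rw [h2]
        rw [if_neg h1, if_pos h2] at h
        exact clampInt_high (hlu i) h
      · have ha : l i < xhat i := (hxl i).lt_of_ne fun e => h1 e.symm
        have hb : xhat i < u i := (hxu i).lt_of_ne h2
        rw [if_neg h1, if_neg h2] at h
        exact clampInt_mid ha hb h.1 h.2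
  have hdiffN : Sc \ So ⊆ N := by
    rintro y ⟨hyc, hyo⟩
    simp only [hScdef, hKdef, Set.mem_preimage, Set.mem_pi, Set.mem_univ, forall_true_left] at hyc
    simp only [hSodef, Set.mem_preimage, Set.mem_pi, Set.mem_univ, forall_true_left] at hyo
    push_neg at hyo
    obtain ⟨i, hi⟩ := hyo
    have hIc := hyc i
    refine Set.mem_iUnion.mpr ⟨i, ?_⟩
    simp only [hIdef] at hIc
    simp only [hJdef] at hi
    by_cases h1 : xhat i = l i
    · rw [if_pos h1] at hIc hi
      exact Or.inl (le_antisymm hIc (not_lt.mp hi))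
    · by_cases h2 : xhat i = u i
      · rw [if_neg h1, if_pos h2] at hIc hi
        exact Or.inr (le_antisymm (not_lt.mp hi) hIc)
      · rw [if_neg h1, if_neg h2] at hIc hi
        rcases not_and_or.mp hi with h | h
        · exact Or.inr (le_antisymm (not_lt.mp h) hIc.1)
        · exact Or.inl (le_antisymm hIc.2 (not_lt.mp h))
  -- N is null for the Gaussian product measure
  have hWlinmeas : Measurable ⇑(Matrix.toLin' R⁻¹) := by rw [hWcoe]; exact hWmeas
  have hslice : ∀ (i : Fin n) (c : ℝ), (volume : Measure (Fin n → ℝ)) {y | W y i = c} = 0 := by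
    intro i c
    have hH : (volume : Measure (Fin n → ℝ)) {x | x i = c} = 0 := by
      rw [volume_pi]
      exact Measure.pi_hyperplane (fun _ : Fin n => (volume : Measure ℝ)) i c
    have hpre : {y : Fin n → ℝ | W y i = c} = (Matrix.toLin' R⁻¹) ⁻¹' {x | x i = c} := by
      ext y
      simp [hWcoe]
    have hsme : MeasurableSet {x : Fin n → ℝ | x i = c} := by
      have he : {x : Fin n → ℝ | x i = c} = (fun x : Fin n → ℝ => x i) ⁻¹' {c} := rfl
      rw [he]
      exact (measurable_pi_apply i) (measurableSet_singleton c)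
    rw [hpre, ← Measure.map_apply hWlinmeas hsme,
      Real.map_matrix_volume_pi_eq_smul_volume_pi hdetinvne]
    simp [hH]
  have hGN : (Measure.pi fun _ : Fin n => gaussianReal 0 v₀) N = 0 := by
    rw [pi_gaussian_eq n hv₀]
    refine withDensity_absolutelyContinuous _ _ ?_
    exact measure_iUnion_null fun i => measure_union_null (hslice i _) (hslice i _)
  -- reduce the probability to the Gaussian measure of Sc
  have hPN : P (v ⁻¹' N) = 0 := by
    rw [← Measure.map_apply hmv hNmeas, hv]
    exact hGN
  have hae : (v ⁻¹' T) =ᵐ[P] (v ⁻¹' Sc) := by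
    rw [MeasureTheory.ae_eq_set]
    constructor
    · rw [Set.diff_eq_empty.mpr (Set.preimage_mono hTsub)]
      exact measure_empty
    · refine measure_mono_null ?_ hPN
      rintro ω ⟨h1, h2⟩
      exact hdiffN ⟨h1, fun hSo => h2 (hSosub hSo)⟩
  have hPT : P (v ⁻¹' T) = (Measure.pi fun _ : Fin n => gaussianReal 0 v₀) Sc := by
    rw [measure_congr hae, ← Measure.map_apply hmv hSc, hv]
  -- compute the Gaussian measure of Sc as an integral
  have hintSc : Integrable (fun y : Fin n → ℝ => ∏ i, gaussianPDFReal 0 v₀ (y i))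
      (volume.restrict Sc) :=
    (Integrable.fintype_prod fun _ => integrable_gaussianPDFReal 0 v₀).restrict
  have hGSc : ((Measure.pi fun _ : Fin n => gaussianReal 0 v₀) Sc).toReal
      = ∫ y in Sc, ∏ i, gaussianPDFReal 0 v₀ (y i) := by
    rw [pi_gaussian_eq n hv₀, withDensity_apply _ hSc,
      ← ofReal_integral_eq_lintegral_ofReal hintSc
        (ae_of_all _ fun y => Finset.prod_nonneg fun i _ => gaussianPDFReal_nonneg _ _ _)]
    exact ENNReal.toReal_ofReal
      (setIntegral_nonneg hSc fun y _ => Finset.prod_nonneg fun i _ => gaussianPDFReal_nonneg _ _ _)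
  -- rewrite the product of densities
  have hprod : ∀ z : Fin n → ℝ, ∏ i, gaussianPDFReal 0 v₀ (z i)
      = ((2 * Real.pi * σ ^ 2) ^ ((n : ℝ) / 2))⁻¹
          * Real.exp (-(∑ j, (z j) ^ 2) / (2 * σ ^ 2)) := by
    intro z
    simp only [gaussianPDFReal, sub_zero, hc]
    rw [Finset.prod_mul_distrib, Finset.prod_const, Finset.card_univ, Fintype.card_fin,
      ← Real.exp_sum]
    congr 1
    · rw [inv_pow]
      congr 1
      rw [Real.sqrt_eq_rpow, ← Real.rpow_natCast ((2 * Real.pi * σ ^ 2) ^ ((1 : ℝ) / 2)) n,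
        ← Real.rpow_mul hπ.le]
      congr 1
      ring
    · congr 1
      rw [neg_div, Finset.sum_div]
      simp_rw [neg_div]
      rw [Finset.sum_neg_distrib]
  -- change of variables
  set F : (Fin n → ℝ) → ℝ := fun y =>
      ((2 * Real.pi * σ ^ 2) ^ ((n : ℝ) / 2))⁻¹
        * Real.exp (-(∑ j, (y j) ^ 2) / (2 * σ ^ 2)) with hFdef
  have hFcont : Continuous F := by
    apply Continuous.mul continuous_const
    apply Real.continuous_exp.comp
    apply Continuous.div_const
    apply Continuous.neg
    exact continuous_finset_sum _ fun j _ => (continuous_apply j).pow 2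
  have hRcoe : ⇑(Matrix.toLin' R) = fun ξ => R *ᵥ ξ := funext fun ξ => Matrix.toLin'_apply R ξ
  have hRmeas : Measurable ⇑(Matrix.toLin' R) := (LinearMap.continuous_on_pi _).measurable
  have hpreim : (Matrix.toLin' R) ⁻¹' Sc = K := by
    ext ξ
    have hWR : W ((Matrix.toLin' R) ξ) = ξ := by
      simp only [hRcoe, hWdef, Matrix.mulVec_mulVec, hinv, Matrix.one_mulVec]
    simp only [Set.mem_preimage, hScdef, hWR]
  have hchange : ∫ y in Sc, F y = |R.det| * ∫ ξ in K, F (R *ᵥ ξ) := by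
    have h1 : ∫ y in Sc, F y ∂(Measure.map (Matrix.toLin' R) volume)
        = ∫ ξ in (Matrix.toLin' R) ⁻¹' Sc, F ((Matrix.toLin' R) ξ) :=
      setIntegral_map hSc hFcont.aestronglyMeasurable hRmeas.aemeasurable
    rw [Real.map_matrix_volume_pi_eq_smul_volume_pi hdetne, hpreim, Measure.restrict_smul,
      integral_smul_measure, ENNReal.toReal_ofReal (by positivity), smul_eq_mul] at h1
    simp only [hRcoe] at h1
    rw [← h1, abs_inv, ← mul_assoc, mul_inv_cancel₀ (by positivity : |R.det| ≠ 0), one_mul]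
  -- final assembly
  calc (P {ω | roundDetector l u (fun i => (xhat i : ℝ) + (R⁻¹ *ᵥ v ω) i) = xhat}).toReal
      = ((Measure.pi fun _ : Fin n => gaussianReal 0 v₀) Sc).toReal := by rw [hE, hPT]
    _ = ∫ y in Sc, ∏ i, gaussianPDFReal 0 v₀ (y i) := hGSc
    _ = ∫ y in Sc, F y := by simp_rw [hprod]; rfl
    _ = |R.det| * ∫ ξ in K, F (R *ᵥ ξ) := hchange
    _ = R.det / (2 * Real.pi * σ ^ 2) ^ ((n : ℝ) / 2) *
        ∫ ξ in K, Real.exp (-(∑ j, ((R *ᵥ ξ) j) ^ 2) / (2 * σ ^ 2)) := by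
      rw [abs_of_pos hdetpos]
      simp only [hFdef]
      rw [MeasureTheory.integral_const_mul, div_eq_mul_inv]
      ring
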